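/- Let K be an algebraically closed field and let f ∈ K[x_1,…,x_n] be a non-constant polynomial whose total degree p is a prime number. Suppose f is decomposable over K, i.e., f = g(h) for some univariate g ∈ K[z] with deg g ≥ 2 and some h ∈ K[x_1,…,x_n]. Then there exist a univariate polynomial α ∈ K[z] of degree p and a polynomial β ∈ K[x_1,…,x_n] of total degree 1 with f = α(β). Consequently, letting t be a new variable and Ω an algebraic closure of K(t), the polynomial f − t factors in Ω[x_1,…,x_n] as c·ℓ_1⋯ℓ_p for some nonzero c ∈ Ω and polynomials ℓ_1,…,ℓ_p ∈ Ω[x_1,…,x_n] each of total degree 1. -/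

import Mathlib

open MvPolynomial

namespace DecompAux

variable {σ : Type*} {R : Type*} [CommSemiring R]

/-- The algebra map sending `X i ↦ C (X i) * X`, turning total degree into `natDegree`. -/
noncomputable def toP : MvPolynomial σ R →ₐ[R] Polynomial (MvPolynomial σ R) :=
  MvPolynomial.aeval (fun i => Polynomial.C (MvPolynomial.X i) * Polynomial.X)

lemma toP_monomial (m : σ →₀ ℕ) (c : R) :
    toP (monomial m c) =
      Polynomial.C (monomial m c) * Polynomial.X ^ (m.sum fun _ e => e) := by
  classical
  rw [toP, aeval_monomial, monomial_eq]
  have h1 : (algebraMap R (Polynomial (MvPolynomial σ R))) c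
      = Polynomial.C (MvPolynomial.C c) := rfl
  rw [h1, Finsupp.prod, Finsupp.prod, Finsupp.sum]
  simp only [mul_pow, ← Polynomial.C_pow, Finset.prod_mul_distrib, ← map_prod,
    Finset.prod_pow_eq_pow_sum]
  rw [Polynomial.C_mul, mul_assoc]

lemma coeff_toP (φ : MvPolynomial σ R) (k : ℕ) :
    (toP φ).coeff k =
      ∑ m ∈ φ.support.filter (fun m => (m.sum fun _ e => e) = k),
        monomial m (coeff m φ) := by
  classical
  conv_lhs => rw [φ.as_sum]
  rw [map_sum, Polynomial.finset_sum_coeff, Finset.sum_filter]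
  refine Finset.sum_congr rfl fun m hm => ?_
  rw [toP_monomial, Polynomial.coeff_C_mul, Polynomial.coeff_X_pow]
  by_cases h : (m.sum fun _ e => e) = k
  · simp [h]
  · rw [if_neg (fun hk => h hk.symm), if_neg h, mul_zero]

lemma natDegree_toP_le (φ : MvPolynomial σ R) : (toP φ).natDegree ≤ φ.totalDegree := by
  classical
  refine Polynomial.natDegree_le_iff_coeff_eq_zero.2 fun k hk => ?_
  rw [coeff_toP]
  refine Finset.sum_eq_zero fun m hm => ?_
  simp only [Finset.mem_filter] at hm
  exact absurd (hm.2 ▸ le_totalDegree hm.1) (not_le.2 hk)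

lemma coeff_toP_totalDegree {φ : MvPolynomial σ R} (hφ : φ ≠ 0) :
    (toP φ).coeff φ.totalDegree ≠ 0 := by
  classical
  obtain ⟨m₀, hm₀, hdeg⟩ := Finset.exists_mem_eq_sup φ.support
    (support_nonempty.2 hφ) (fun m => m.sum fun _ e => e)
  rw [coeff_toP]
  have h0 : MvPolynomial.coeff m₀
      (∑ m ∈ φ.support.filter (fun m => (m.sum fun _ e => e) = φ.totalDegree),
        monomial m (coeff m φ)) = coeff m₀ φ := by
    rw [MvPolynomial.coeff_sum]
    rw [Finset.sum_eq_single m₀]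
    · simp
    · intro m hm hne
      simp [coeff_monomial, hne]
    · intro hm
      exact absurd (Finset.mem_filter.2 ⟨hm₀, hdeg.symm⟩) hm
  intro h
  rw [h] at h0
  simp only [coeff_zero] at h0
  exact (mem_support_iff.1 hm₀) h0.symm

lemma natDegree_toP {φ : MvPolynomial σ R} (hφ : φ ≠ 0) :
    (toP φ).natDegree = φ.totalDegree :=
  le_antisymm (natDegree_toP_le φ)
    (Polynomial.le_natDegree_of_ne_zero (coeff_toP_totalDegree hφ))

lemma toP_ne_zero {φ : MvPolynomial σ R} (hφ : φ ≠ 0) : toP φ ≠ 0 := fun h => by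
  have := coeff_toP_totalDegree hφ
  rw [h] at this
  simp at this

lemma totalDegree_aeval {K : Type*} [Field K] {g : Polynomial K} {h : MvPolynomial σ K}
    (hf : (Polynomial.aeval h g) ≠ 0) (hh : h ≠ 0) :
    (Polynomial.aeval h g).totalDegree = g.natDegree * h.totalDegree := by
  have e : toP (Polynomial.aeval h g)
      = (g.map (algebraMap K (MvPolynomial σ K))).comp (toP h) := by
    rw [← Polynomial.aeval_algHom_apply]
    rw [Polynomial.comp, Polynomial.eval₂_map, Polynomial.aeval_def]
    congr 1
  have := natDegree_toP hf
  rw [e, Polynomial.natDegree_comp, Polynomial.natDegree_map, natDegree_toP hh] at this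
  exact this.symm

lemma totalDegree_map_of_injective {K L : Type*} [CommSemiring K] [CommSemiring L]
    (ψ : K →+* L) (hψ : Function.Injective ψ) (h : MvPolynomial σ K) :
    (MvPolynomial.map ψ h).totalDegree = h.totalDegree := by
  rw [totalDegree, totalDegree, support_map_of_injective h hψ]

lemma totalDegree_sub_C {K : Type*} [CommRing K] {h : MvPolynomial σ K}
    (hh : h.totalDegree = 1) (a : K) : (h - MvPolynomial.C a).totalDegree = 1 := by
  refine le_antisymm ?_ ?_
  · refine le_trans (totalDegree_sub h (MvPolynomial.C a)) ?_
    simp [hh, totalDegree_C]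
  · have heq : h = (h - MvPolynomial.C a) + MvPolynomial.C a := by ring
    have h2 := totalDegree_add (h - MvPolynomial.C a) (MvPolynomial.C a)
    rw [← heq, hh] at h2
    simpa using h2

end DecompAux

/-- A polynomial `f ∈ K[x₁,…,xₙ]` is *decomposable* over `K` if `f = g(h)` for some
univariate `g ∈ K[z]` with `deg g ≥ 2` and some `h ∈ K[x₁,…,xₙ]`. -/
def MvPolynomial.Decomposable {K : Type*} [CommSemiring K] {n : ℕ}
    (f : MvPolynomial (Fin n) K) : Prop :=
  ∃ (g : Polynomial K) (h : MvPolynomial (Fin n) K),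
    2 ≤ g.natDegree ∧ f = Polynomial.aeval h g

/-- **Decomposable polynomials of prime degree split into linear pieces.**
Let `K` be an algebraically closed field and let `f ∈ K[x₁,…,xₙ]` be a non-constant
polynomial whose total degree `p` is prime. If `f` is decomposable over `K`, then
`f = α(β)` for some univariate `α ∈ K[z]` of degree `p` and some `β ∈ K[x₁,…,xₙ]` of
total degree `1`; consequently, over an algebraic closure `Ω` of `K(t)`, the polynomial
`f − t` factors as `c·ℓ₁⋯ℓ_p` with `c ∈ Ω` nonzero and each `ℓᵢ ∈ Ω[x₁,…,xₙ]` of total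
degree `1`. -/
theorem prime_degree_decomposable_splits
    (K : Type) [Field K] [IsAlgClosed K] (n : ℕ) (hn : 1 ≤ n)
    (f : MvPolynomial (Fin n) K) (p : ℕ) (hp : p.Prime)
    (hdeg : f.totalDegree = p) (hdec : f.Decomposable) :
    (∃ (α : Polynomial K) (β : MvPolynomial (Fin n) K),
        α.natDegree = p ∧ β.totalDegree = 1 ∧ f = Polynomial.aeval β α) ∧
    (∃ (c : AlgebraicClosure (RatFunc K))
        (ℓ : Fin p → MvPolynomial (Fin n) (AlgebraicClosure (RatFunc K))),
        c ≠ 0 ∧ (∀ i, (ℓ i).totalDegree = 1) ∧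
        MvPolynomial.map (algebraMap K (AlgebraicClosure (RatFunc K))) f
            - MvPolynomial.C
                (algebraMap (RatFunc K) (AlgebraicClosure (RatFunc K)) RatFunc.X)
          = MvPolynomial.C c * ∏ i, ℓ i) := by
  classical
  obtain ⟨g, h, hg2, hf⟩ := hdec
  have hp0 : p ≠ 0 := hp.ne_zero
  have hf0 : f ≠ 0 := by
    intro h0; rw [h0, totalDegree_zero] at hdeg; exact hp0 hdeg.symm
  have hh0 : h ≠ 0 := by
    rintro rfl
    rw [hf, Polynomial.aeval_def, Polynomial.eval₂_at_zero, MvPolynomial.algebraMap_eq,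
      totalDegree_C] at hdeg
    exact hp0 hdeg.symm
  have hkey : p = g.natDegree * h.totalDegree := by
    rw [← hdeg, hf, DecompAux.totalDegree_aeval (hf ▸ hf0) hh0]
  have hgp : g.natDegree = p := by
    rcases Nat.Prime.eq_one_or_self_of_dvd hp _ ⟨_, hkey⟩ with h1 | h1
    · omega
    · exact h1
  have htd1 : h.totalDegree = 1 := by
    rw [hgp] at hkey
    have h2 : p * h.totalDegree = p * 1 := by rw [mul_one]; exact hkey.symm
    exact Nat.eq_of_mul_eq_mul_left (Nat.pos_of_ne_zero hp0) h2
  refine ⟨⟨g, h, hgp, htd1, hf⟩, ?_⟩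
  set Ω := AlgebraicClosure (RatFunc K) with hΩ
  set ψ : K →+* Ω := algebraMap K Ω with hψ
  set t : Ω := algebraMap (RatFunc K) Ω RatFunc.X with ht
  set P : Polynomial Ω := g.map ψ - Polynomial.C t with hP
  have hPdeg : P.natDegree = p := by
    rw [hP, Polynomial.natDegree_sub_C, Polynomial.natDegree_map, hgp]
  have hP0 : P ≠ 0 := by
    intro h0; rw [h0, Polynomial.natDegree_zero] at hPdeg; exact hp0 hPdeg.symm
  have hsplit : P.Splits := IsAlgClosed.splits P
  have hroots : P.roots.card = p := by
    rw [Polynomial.splits_iff_card_roots.1 hsplit, hPdeg]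
  set L := P.roots.toList with hLdef
  have hL : L.length = p := by rw [hLdef, Multiset.length_toList, hroots]
  set H : MvPolynomial (Fin n) Ω := MvPolynomial.map ψ h with hH
  have htdH : H.totalDegree = 1 := by
    rw [hH, DecompAux.totalDegree_map_of_injective ψ (RingHom.injective ψ) h, htd1]
  set r : Fin p → Ω := fun i => L.get (Fin.cast hL.symm i) with hr
  refine ⟨P.leadingCoeff, fun i => H - MvPolynomial.C (r i),
    Polynomial.leadingCoeff_ne_zero.2 hP0,
    fun i => DecompAux.totalDegree_sub_C htdH _, ?_⟩
  have hmapf : MvPolynomial.map ψ f = Polynomial.aeval H (g.map ψ) := by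
    rw [hf, Polynomial.aeval_def, Polynomial.aeval_def, Polynomial.eval₂_map,
      Polynomial.hom_eval₂]
    congr 1
    ext a : 1
    simp [MvPolynomial.algebraMap_eq]
  have hPfact := hsplit.eq_prod_roots
  have step1 : MvPolynomial.map ψ f - MvPolynomial.C t = Polynomial.aeval H P := by
    rw [hP, map_sub, hmapf, Polynomial.aeval_C, MvPolynomial.algebraMap_eq]
  rw [step1]
  conv_lhs => rw [hPfact]
  rw [map_mul, Polynomial.aeval_C, MvPolynomial.algebraMap_eq]
  congr 1
  rw [map_multiset_prod, Multiset.map_map]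
  have hcoe : P.roots = (L : Multiset Ω) := (Multiset.coe_toList _).symm
  rw [hcoe]
  simp only [Multiset.map_coe, Multiset.prod_coe]
  rw [← Fin.prod_univ_fun_getElem]
  refine Fintype.prod_equiv (finCongr hL) _ _ fun j => ?_
  simp only [Function.comp_apply, Polynomial.aeval_X, map_sub, Polynomial.aeval_C,
    MvPolynomial.algebraMap_eq, hr, List.get_eq_getElem]
  rfl
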